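/- Let d ≥ 2 be a natural number, let z_1, …, z_d ∈ ℂ be pairwise distinct, and let g be the polynomial ∏_{i=1}^d (X − z_i). Let P and Q be polynomials over ℂ with deg P ≤ d, deg Q ≤ d − 1, and P ≠ X·Q. Suppose that for every i: Q(z_i) ≠ 0, P(z_i) = z_i·Q(z_i), and (P′·Q − P·Q′)(z_i) = 0. Then there exists ρ ∈ ℂ, ρ ≠ 0, such that Q = ρ·g′ and P = ρ·(X·g′ − g); that is, the rational function P/Q equals the Newton's method map N_g(z) = z − g(z)/g′(z) of the polynomial g. -/

import Mathlib

open Polynomial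

lemma stmt15_aux (d : ℕ) (z : Fin d → ℂ) (hz : Function.Injective z)
    (r : Polynomial ℂ) (h : ∀ i, r.eval (z i) = 0) :
    (∏ i : Fin d, (X - C (z i))) ∣ r := by
  apply Finset.prod_dvd_of_coprime
  · intro i _ j _ hij
    exact isCoprime_X_sub_C_of_isUnit_sub
      (IsUnit.mk0 _ (sub_ne_zero.2 fun e => hij (hz e)))
  · intro i _
    exact dvd_iff_isRoot.2 (h i)

/-- A rational map of degree ≤ d with d superattracting fixed points is the
Newton's method map of the degree-d polynomial vanishing at those points. -/
theorem stmt15 (d : ℕ) (hd : 2 ≤ d) (z : Fin d → ℂ) (hz : Function.Injective z)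
    (g : Polynomial ℂ) (hg : g = ∏ i : Fin d, (X - C (z i)))
    (P Q : Polynomial ℂ) (hPdeg : P.degree ≤ (d : ℕ))
    (hQdeg : Q.degree ≤ ((d - 1 : ℕ) : ℕ)) (hPQ : P ≠ X * Q)
    (hQz : ∀ i, Q.eval (z i) ≠ 0)
    (hfix : ∀ i, P.eval (z i) = z i * Q.eval (z i))
    (hcrit : ∀ i, (P.derivative * Q - P * Q.derivative).eval (z i) = 0) :
    ∃ ρ : ℂ, ρ ≠ 0 ∧ Q = C ρ * g.derivative ∧
      P = C ρ * (X * g.derivative - g) := by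
  have hgmon : g.Monic := by
    rw [hg]; exact monic_prod_of_monic _ _ fun i _ => monic_X_sub_C _
  have hgnat : g.natDegree = d := by
    rw [hg, natDegree_prod _ _ (fun i _ => X_sub_C_ne_zero (z i))]
    simp [natDegree_X_sub_C]
  have hgdeg : g.degree = (d : ℕ) := by
    rw [degree_eq_natDegree hgmon.ne_zero, hgnat]
  have hgz : ∀ i, g.eval (z i) = 0 := by
    intro i
    rw [hg, eval_prod]
    exact Finset.prod_eq_zero (Finset.mem_univ i) (by simp)
  -- R = X*Q - P is divisible by g
  have hRz : ∀ i, (X * Q - P).eval (z i) = 0 := by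
    intro i; simp [hfix i]
  obtain ⟨s, hs⟩ : g ∣ (X * Q - P) := by rw [hg]; exact stmt15_aux d z hz _ hRz
  have hRne : X * Q - P ≠ 0 := sub_ne_zero.2 fun e => hPQ e.symm
  have hsne : s ≠ 0 := by rintro rfl; simp [hs] at hRne
  have hRdeg : (X * Q - P).natDegree ≤ d := by
    refine natDegree_le_iff_degree_le.2 ?_
    refine le_trans (degree_sub_le _ _) (max_le ?_ hPdeg)
    calc (X * Q).degree ≤ X.degree + Q.degree := degree_mul_le _ _
      _ ≤ 1 + ((d - 1 : ℕ) : WithBot ℕ) := add_le_add degree_X_le hQdeg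
      _ = ((1 + (d - 1) : ℕ) : WithBot ℕ) := by push_cast; ring
      _ ≤ ((d : ℕ) : WithBot ℕ) := by exact_mod_cast (by omega : 1 + (d - 1) ≤ d)
  have hsnat : s.natDegree = 0 := by
    have := hRdeg
    rw [hs, natDegree_mul hgmon.ne_zero hsne, hgnat] at this
    omega
  obtain ⟨c, rfl⟩ : ∃ c, s = C c := ⟨s.coeff 0, eq_C_of_natDegree_eq_zero hsnat⟩
  have hcne : c ≠ 0 := fun e => hsne (by rw [e, map_zero])
  have hP : P = X * Q - C c * g := by
    have h := hs
    rw [mul_comm g (C c)] at h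
    linear_combination -h
  -- eval of Q at each root equals c * g'
  have key : ∀ i, (Q - C c * g.derivative).eval (z i) = 0 := by
    intro i
    have h := hcrit i
    rw [hP] at h
    simp only [derivative_sub, derivative_mul, derivative_X, derivative_C,
      one_mul, zero_mul, zero_add, eval_sub, eval_mul, eval_add, eval_X,
      eval_C, hgz i, mul_zero, sub_zero] at h
    have hq : Q.eval (z i) * (Q.eval (z i) - c * g.derivative.eval (z i)) = 0 := by
      linear_combination h
    rcases mul_eq_zero.1 hq with h' | h'
    · exact absurd h' (hQz i)
    · simpa using h'
  obtain ⟨t, ht⟩ : g ∣ (Q - C c * g.derivative) := by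
    conv => rw [hg]
    exact stmt15_aux d z hz _ (by rw [← hg]; exact key)
  have hdiff : Q - C c * g.derivative = 0 := by
    refine eq_zero_of_dvd_of_degree_lt ⟨t, ht⟩ ?_
    rw [hgdeg]
    refine lt_of_le_of_lt (degree_sub_le _ _) (max_lt ?_ ?_)
    · exact lt_of_le_of_lt hQdeg (by exact_mod_cast (by omega : d - 1 < d))
    · refine lt_of_le_of_lt (degree_mul_le _ _) ?_
      refine lt_of_le_of_lt (add_le_add degree_C_le le_rfl) ?_
      rw [zero_add]
      exact hgdeg ▸ degree_derivative_lt hgmon.ne_zero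
  have hQ : Q = C c * g.derivative := by linear_combination hdiff
  refine ⟨c, hcne, hQ, ?_⟩
  rw [hP, hQ]; ring
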